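/- arXiv:1802.08372 — 2 statements merged into one kernel-verified Lean document; each statement's English description precedes it below -/
import Mathlib

section
/- Let m, k, n, τ be integers with 0 ≤ τ ≤ m ≤ k ≤ n and m < n, let T ⊆ [n] with |T| = m, and let x ∈ ℝ_{≥0}^n. Then (n−m)^{m−τ} · C(n−m, k−m) · Σ_{Q ⊆ [n]∖T, |Q| = k−τ} ∏_{i∈Q} x_i ≤ C(n−m, k−τ) · (Σ_{R ⊆ [n]∖T, |R| = k−m} ∏_{j∈R} x_j) · (Σ_{i∈[n]∖T} x_i)^{m−τ}. -/
open Finset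

lemma myReindex {ι : Type*} [DecidableEq ι] (s : Finset ι) (j : ℕ)
    (F : Finset ι → ι → ℝ) :
    ∑ A ∈ s.powersetCard (j+1), ∑ i ∈ A, F (A.erase i) i
      = ∑ C ∈ s.powersetCard j, ∑ i ∈ s \ C, F C i := by
  rw [Finset.sum_sigma', Finset.sum_sigma']
  refine Finset.sum_bij' (fun p _ => ⟨p.1.erase p.2, p.2⟩)
    (fun p _ => ⟨insert p.2 p.1, p.2⟩) ?_ ?_ ?_ ?_ ?_
  · rintro ⟨A, i⟩ hp
    simp only [Finset.mem_sigma, Finset.mem_powersetCard] at hp ⊢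
    obtain ⟨⟨hAs, hAc⟩, hi⟩ := hp
    refine ⟨⟨(Finset.erase_subset _ _).trans hAs, ?_⟩, ?_⟩
    · rw [Finset.card_erase_of_mem hi, hAc]; rfl
    · exact Finset.mem_sdiff.2 ⟨hAs hi, Finset.notMem_erase _ _⟩
  · rintro ⟨C, i⟩ hp
    simp only [Finset.mem_sigma, Finset.mem_powersetCard, Finset.mem_sdiff] at hp ⊢
    obtain ⟨⟨hCs, hCc⟩, his, hiC⟩ := hp
    refine ⟨⟨Finset.insert_subset his hCs, ?_⟩, Finset.mem_insert_self _ _⟩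
    rw [Finset.card_insert_of_notMem hiC, hCc]
  · rintro ⟨A, i⟩ hp
    simp only [Finset.mem_sigma] at hp
    simp [Finset.insert_erase hp.2]
  · rintro ⟨C, i⟩ hp
    simp only [Finset.mem_sigma, Finset.mem_sdiff] at hp
    simp [Finset.erase_insert hp.2.2]
  · intros; rfl

lemma myClaim1 {ι : Type*} [DecidableEq ι] (s : Finset ι) (x : ι → ℝ) (j : ℕ) :
    ((j:ℝ)+1) * ∑ B ∈ s.powersetCard (j+1), ∏ i ∈ B, x i
      = ∑ A ∈ s.powersetCard j, (∑ i ∈ s \ A, x i) * ∏ i ∈ A, x i := by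
  have h1 : ∀ B ∈ s.powersetCard (j+1), ((j:ℝ)+1) * ∏ i ∈ B, x i
      = ∑ i ∈ B, x i * ∏ a ∈ B.erase i, x a := by
    intro B hB
    rw [Finset.mem_powersetCard] at hB
    rw [Finset.sum_congr rfl (fun i hi => Finset.mul_prod_erase B x hi),
        Finset.sum_const, hB.2, nsmul_eq_mul]
    push_cast; ring
  rw [Finset.mul_sum, Finset.sum_congr rfl h1,
      myReindex s j (fun C i => x i * ∏ a ∈ C, x a)]
  exact Finset.sum_congr rfl fun A _ => (Finset.sum_mul _ _ _).symm

lemma myClaim2 {ι : Type*} [DecidableEq ι] (s : Finset ι) (x : ι → ℝ) (c : ℕ) :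
    ∑ A ∈ s.powersetCard (c+1), (∑ i ∈ A, x i) * ∏ i ∈ A, x i
      = ∑ C ∈ s.powersetCard c, (∑ i ∈ s \ C, (x i)^2) * ∏ i ∈ C, x i := by
  have h1 : ∀ A ∈ s.powersetCard (c+1), (∑ i ∈ A, x i) * ∏ i ∈ A, x i
      = ∑ i ∈ A, (x i)^2 * ∏ a ∈ A.erase i, x a := by
    intro A hA
    rw [Finset.sum_mul]
    refine Finset.sum_congr rfl fun i hi => ?_
    rw [← Finset.mul_prod_erase A x hi]; ring
  rw [Finset.sum_congr rfl h1, myReindex s c (fun C i => (x i)^2 * ∏ a ∈ C, x a)]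
  exact Finset.sum_congr rfl fun C _ => (Finset.sum_mul _ _ _).symm

lemma myClaim3 {ι : Type*} [DecidableEq ι] (s : Finset ι) (x : ι → ℝ) (c : ℕ) :
    ∑ A ∈ s.powersetCard (c+1), ((c:ℝ)+1) * (∑ i ∈ s \ A, x i) * ∏ i ∈ A, x i
      = ∑ C ∈ s.powersetCard c, (∑ i' ∈ s \ C, x i' * ∑ i ∈ (s \ C).erase i', x i)
          * ∏ a ∈ C, x a := by
  have h1 : ∀ A ∈ s.powersetCard (c+1), ((c:ℝ)+1) * (∑ i ∈ s \ A, x i) * ∏ i ∈ A, x i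
      = ∑ i' ∈ A, x i' * (∑ i ∈ s \ insert i' (A.erase i'), x i) * ∏ a ∈ A.erase i', x a := by
    intro A hA
    rw [Finset.mem_powersetCard] at hA
    have : ∀ i' ∈ A, x i' * (∑ i ∈ s \ insert i' (A.erase i'), x i) * ∏ a ∈ A.erase i', x a
        = (∑ i ∈ s \ A, x i) * (x i' * ∏ a ∈ A.erase i', x a) := by
      intro i' hi'
      rw [Finset.insert_erase hi']; ring
    rw [Finset.sum_congr rfl this, ← Finset.mul_sum,
        Finset.sum_congr rfl (fun i hi => Finset.mul_prod_erase A x hi),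
        Finset.sum_const, hA.2, nsmul_eq_mul]
    push_cast; ring
  rw [Finset.sum_congr rfl h1,
      myReindex s c (fun C i' => x i' * (∑ i ∈ s \ insert i' C, x i) * ∏ a ∈ C, x a)]
  refine Finset.sum_congr rfl fun C _ => ?_
  rw [Finset.sum_mul]
  exact Finset.sum_congr rfl fun i' _ => by rw [Finset.sdiff_insert]

lemma myEsymmNonneg {ι : Type*} [DecidableEq ι] (s : Finset ι) (x : ι → ℝ)
    (hx : ∀ i, 0 ≤ x i) (j : ℕ) : 0 ≤ ∑ A ∈ s.powersetCard j, ∏ i ∈ A, x i :=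
  Finset.sum_nonneg fun _ _ => Finset.prod_nonneg fun i _ => hx i

lemma myKey {ι : Type*} [DecidableEq ι] (s : Finset ι) (x : ι → ℝ)
    (hx : ∀ i, 0 ≤ x i) (j : ℕ) (hjN : j + 1 ≤ s.card) :
    (j:ℝ) * ∑ A ∈ s.powersetCard j, (∑ i ∈ s \ A, x i) * ∏ i ∈ A, x i
      ≤ ((s.card : ℝ) - j) * ∑ A ∈ s.powersetCard j, (∑ i ∈ A, x i) * ∏ i ∈ A, x i := by
  obtain rfl | ⟨c, rfl⟩ : j = 0 ∨ ∃ c, j = c + 1 := by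
    rcases j with _ | c
    · exact Or.inl rfl
    · exact Or.inr ⟨c, rfl⟩
  · simp only [Nat.cast_zero, zero_mul, sub_zero]
    refine mul_nonneg (by positivity) (Finset.sum_nonneg fun A _ => ?_)
    exact mul_nonneg (Finset.sum_nonneg fun i _ => hx i)
      (Finset.prod_nonneg fun i _ => hx i)
  · have hc : True := trivial
    have hLHS : ((c:ℝ)+1) * ∑ A ∈ s.powersetCard (c+1), (∑ i ∈ s \ A, x i) * ∏ i ∈ A, x i
        = ∑ C ∈ s.powersetCard c,
            (∑ i' ∈ s \ C, x i' * ∑ i ∈ (s \ C).erase i', x i) * ∏ a ∈ C, x a := by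
      rw [Finset.mul_sum, ← myClaim3 s x c]
      exact Finset.sum_congr rfl fun A _ => by ring
    push_cast [Nat.succ_eq_add_one] at hLHS ⊢
    rw [hLHS, myClaim2 s x c, Finset.mul_sum]
    refine Finset.sum_le_sum fun C hC => ?_
    rw [Finset.mem_powersetCard] at hC
    have hcN : c + 1 + 1 ≤ s.card := by omega
    have hDcard : ((s \ C).card : ℝ) = (s.card : ℝ) - c := by
      rw [Finset.card_sdiff_of_subset hC.1, hC.2, Nat.cast_sub (by omega)]
    have hprod : (0:ℝ) ≤ ∏ a ∈ C, x a := Finset.prod_nonneg fun i _ => hx i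
    rw [← mul_assoc]
    refine mul_le_mul_of_nonneg_right ?_ hprod
    set D := s \ C with hD
    have hexp : ∑ i' ∈ D, x i' * ∑ i ∈ D.erase i', x i
        = (∑ i ∈ D, x i)^2 - ∑ i ∈ D, (x i)^2 := by
      have h4 : ∀ i' ∈ D, x i' * ∑ i ∈ D.erase i', x i
          = x i' * ∑ i ∈ D, x i - (x i')^2 := by
        intro i' h
        rw [← Finset.add_sum_erase D x h]; ring
      rw [Finset.sum_congr rfl h4, Finset.sum_sub_distrib, ← Finset.sum_mul]
      ring
    have hCS := sq_sum_le_card_mul_sum_sq (s := D) (f := x)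
    have h6 : ((s.card : ℝ) - ((c:ℝ)+1)) = ((D.card : ℝ) - 1) := by rw [hDcard]; ring
    rw [hexp, h6]
    nlinarith [hCS, Finset.sum_nonneg (fun i (_ : i ∈ D) => sq_nonneg (x i))]

lemma myStep {ι : Type*} [DecidableEq ι] (s : Finset ι) (x : ι → ℝ)
    (hx : ∀ i, 0 ≤ x i) (j : ℕ) :
    (s.card : ℝ) * ((j:ℝ)+1) * ∑ B ∈ s.powersetCard (j+1), ∏ i ∈ B, x i
      ≤ ((s.card - j : ℕ) : ℝ) * (∑ A ∈ s.powersetCard j, ∏ i ∈ A, x i) * ∑ i ∈ s, x i := by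
  by_cases hjN : j + 1 ≤ s.card
  · have hcast : ((s.card - j : ℕ) : ℝ) = (s.card : ℝ) - j := by
      rw [Nat.cast_sub (Nat.le_of_succ_le hjN)]
    have hdecomp : (∑ A ∈ s.powersetCard j, ∏ i ∈ A, x i) * ∑ i ∈ s, x i
        = (∑ A ∈ s.powersetCard j, (∑ i ∈ s \ A, x i) * ∏ i ∈ A, x i)
          + ∑ A ∈ s.powersetCard j, (∑ i ∈ A, x i) * ∏ i ∈ A, x i := by
      rw [← Finset.sum_add_distrib, Finset.sum_mul]
      refine Finset.sum_congr rfl fun A hA => ?_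
      rw [Finset.mem_powersetCard] at hA
      rw [← Finset.sum_sdiff hA.1 (f := x)]; ring
    have hkey := myKey s x hx j hjN
    have hC1 : (s.card : ℝ) * ((j:ℝ)+1) * ∑ B ∈ s.powersetCard (j+1), ∏ i ∈ B, x i
        = (s.card : ℝ) * ∑ A ∈ s.powersetCard j, (∑ i ∈ s \ A, x i) * ∏ i ∈ A, x i := by
      rw [mul_assoc, myClaim1 s x j]
    rw [hC1, hcast, mul_assoc, hdecomp]
    nlinarith [hkey]
  · push_neg at hjN
    rw [Finset.powersetCard_eq_empty.2 hjN, Finset.sum_empty, mul_zero]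
    refine mul_nonneg (mul_nonneg (by positivity) (myEsymmNonneg s x hx j))
      (Finset.sum_nonneg fun i _ => hx i)

lemma myBinomStep {ι : Type*} [DecidableEq ι] (s : Finset ι) (x : ι → ℝ)
    (hx : ∀ i, 0 ≤ x i) (j : ℕ) :
    (s.card : ℝ) * (s.card.choose j : ℝ) * ∑ B ∈ s.powersetCard (j+1), ∏ i ∈ B, x i
      ≤ (s.card.choose (j+1) : ℝ) * (∑ A ∈ s.powersetCard j, ∏ i ∈ A, x i)
          * ∑ i ∈ s, x i := by
  have h1 := myStep s x hx j
  have h2 : (s.card.choose (j+1) : ℝ) * ((j:ℝ)+1)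
      = (s.card.choose j : ℝ) * ((s.card - j : ℕ) : ℝ) := by
    exact_mod_cast congrArg (Nat.cast (R := ℝ)) (Nat.choose_succ_right_eq s.card j)
  have hCj : (0:ℝ) ≤ (s.card.choose j : ℝ) := by positivity
  refine le_of_mul_le_mul_left ?_ (show (0:ℝ) < (j:ℝ)+1 by positivity)
  set e' := ∑ B ∈ s.powersetCard (j+1), ∏ i ∈ B, x i
  set e := ∑ A ∈ s.powersetCard j, ∏ i ∈ A, x i
  set p := ∑ i ∈ s, x i
  calc ((j:ℝ)+1) * ((s.card:ℝ) * (s.card.choose j : ℝ) * e')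
      = (s.card.choose j : ℝ) * ((s.card:ℝ) * ((j:ℝ)+1) * e') := by ring
    _ ≤ (s.card.choose j : ℝ) * (((s.card - j : ℕ):ℝ) * e * p) :=
        mul_le_mul_of_nonneg_left h1 hCj
    _ = ((j:ℝ)+1) * ((s.card.choose (j+1) : ℝ) * e * p) := by
        linear_combination (-(e * p)) * h2

lemma myMain {ι : Type*} [DecidableEq ι] (s : Finset ι) (x : ι → ℝ)
    (hx : ∀ i, 0 ≤ x i) (d a : ℕ) :
    (s.card : ℝ)^d * (s.card.choose a : ℝ) * ∑ B ∈ s.powersetCard (a+d), ∏ i ∈ B, x i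
      ≤ (s.card.choose (a+d) : ℝ) * (∑ A ∈ s.powersetCard a, ∏ i ∈ A, x i)
          * (∑ i ∈ s, x i)^d := by
  have hp : (0:ℝ) ≤ ∑ i ∈ s, x i := Finset.sum_nonneg fun i _ => hx i
  induction d with
  | zero => simp
  | succ d ih =>
    rw [show a + (d+1) = a + d + 1 from rfl]
    by_cases hj : a + d + 1 ≤ s.card
    · have hb := myBinomStep s x hx (a + d)
      have hCjpos : (0:ℝ) < (s.card.choose (a+d) : ℝ) := by
        exact_mod_cast Nat.choose_pos (Nat.le_of_succ_le hj)
      refine le_of_mul_le_mul_left ?_ hCjpos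
      set e2 := ∑ B ∈ s.powersetCard (a+d+1), ∏ i ∈ B, x i
      set e1 := ∑ B ∈ s.powersetCard (a+d), ∏ i ∈ B, x i
      set e0 := ∑ A ∈ s.powersetCard a, ∏ i ∈ A, x i
      set p := ∑ i ∈ s, x i
      have he1 : (0:ℝ) ≤ e1 := myEsymmNonneg s x hx (a+d)
      calc (s.card.choose (a+d) : ℝ) * ((s.card:ℝ)^(d+1) * (s.card.choose a : ℝ) * e2)
          = ((s.card:ℝ)^d * (s.card.choose a : ℝ))
              * ((s.card:ℝ) * (s.card.choose (a+d) : ℝ) * e2) := by ring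
        _ ≤ ((s.card:ℝ)^d * (s.card.choose a : ℝ))
              * ((s.card.choose (a+d+1) : ℝ) * e1 * p) :=
            mul_le_mul_of_nonneg_left hb (by positivity)
        _ = ((s.card.choose (a+d+1) : ℝ) * p)
              * ((s.card:ℝ)^d * (s.card.choose a : ℝ) * e1) := by ring
        _ ≤ ((s.card.choose (a+d+1) : ℝ) * p)
              * ((s.card.choose (a+d) : ℝ) * e0 * p^d) :=
            mul_le_mul_of_nonneg_left ih (mul_nonneg (by positivity) hp)
        _ = (s.card.choose (a+d) : ℝ)
              * ((s.card.choose (a+d+1) : ℝ) * e0 * p^(d+1)) := by ring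
    · push_neg at hj
      rw [Finset.powersetCard_eq_empty.2 hj, Finset.sum_empty, mul_zero]
      exact mul_nonneg (mul_nonneg (by positivity) (myEsymmNonneg s x hx a))
        (pow_nonneg hp _)

/-- Elementary symmetric polynomial inequality (from Maclaurin's and the generalized
Newton inequalities) bounding `e_{k-τ}` on `[n]∖T` by `e_{k-m}` times a power sum. -/
theorem stmt17 (m k n τ : ℕ) (hτ : τ ≤ m) (hmk : m ≤ k) (hkn : k ≤ n) (hmn : m < n)
    (T : Finset (Fin n)) (hT : T.card = m) (x : Fin n → ℝ) (hx : ∀ i, 0 ≤ x i) :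
    ((n - m : ℕ) : ℝ) ^ (m - τ) * ((n - m).choose (k - m) : ℝ) *
        ∑ Q ∈ (Finset.univ \ T).powersetCard (k - τ), ∏ i ∈ Q, x i
      ≤ ((n - m).choose (k - τ) : ℝ) *
          (∑ R ∈ (Finset.univ \ T).powersetCard (k - m), ∏ j ∈ R, x j) *
          (∑ i ∈ Finset.univ \ T, x i) ^ (m - τ) := by
  have hN : ((Finset.univ : Finset (Fin n)) \ T).card = n - m := by
    rw [Finset.card_sdiff_of_subset (Finset.subset_univ T), Finset.card_univ, Fintype.card_fin, hT]
  have hadd : (k - m) + (m - τ) = k - τ := by omega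
  rw [← hN, ← hadd]
  exact myMain (Finset.univ \ T) x hx (m - τ) (k - m)
end

section
/- Let m ≤ k be positive integers and let y be a real number with 0 ≤ y ≤ m. Then Σ_{τ=0}^{m} ((k−m)!/(k−τ)!) · (C(m,τ)/m^τ) · (k−y)^{m−τ} · y^τ ≤ (1 + k/(k−m+1))^m. -/
open Finset

/-- The limiting (as `n → ∞`) bounding function of the proportional sampling analysis
is at most `(1 + k/(k-m+1))^m` for all `y ∈ [0, m]`. -/
theorem stmt19 (m k : ℕ) (hm : 1 ≤ m) (hmk : m ≤ k)
    (y : ℝ) (hy0 : 0 ≤ y) (hym : y ≤ (m : ℝ)) :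
    ∑ τ ∈ Finset.range (m + 1),
        (((k - m).factorial : ℝ) / ((k - τ).factorial : ℝ))
          * ((m.choose τ : ℝ) / (m : ℝ) ^ τ)
          * ((k : ℝ) - y) ^ (m - τ) * y ^ τ
      ≤ (1 + (k : ℝ) / ((k : ℝ) - (m : ℝ) + 1)) ^ m := by
  have hmkR : (m : ℝ) ≤ (k : ℝ) := by exact_mod_cast hmk
  have hd : (0:ℝ) < (k : ℝ) - (m : ℝ) + 1 := by linarith
  have hm0 : (0:ℝ) < (m:ℝ) := by exact_mod_cast hm
  have hky : 0 ≤ (k:ℝ) - y := by linarith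
  set d : ℝ := (k : ℝ) - (m : ℝ) + 1 with hdd
  set c : ℝ := (k : ℝ) / d with hc
  have hrhs : (1 + c) ^ m
      = ∑ τ ∈ Finset.range (m+1), (m.choose τ : ℝ) * c ^ (m - τ) := by
    rw [add_pow]
    exact Finset.sum_congr rfl fun τ hτ => by ring
  rw [hrhs]
  refine Finset.sum_le_sum fun τ hτ => ?_
  have hτm : τ ≤ m := Nat.lt_succ_iff.mp (Finset.mem_range.mp hτ)
  have hcast : ((k - m + 1 : ℕ) : ℝ) = d := by
    rw [Nat.cast_add, Nat.cast_sub hmk, Nat.cast_one]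
  have hfact : ((k - m).factorial : ℝ) * d ^ (m - τ) ≤ ((k - τ).factorial : ℝ) := by
    have h1 : (k - m).factorial * (k - m + 1) ^ (m - τ) ≤ (k - τ).factorial := by
      have := Nat.factorial_mul_pow_le_factorial (m := k - m) (n := m - τ)
      have heq : k - m + (m - τ) = k - τ := by omega
      rwa [heq] at this
    calc ((k - m).factorial : ℝ) * d ^ (m - τ)
        = (((k - m).factorial * (k - m + 1) ^ (m - τ) : ℕ) : ℝ) := by
          push_cast [hcast]; ring
      _ ≤ ((k - τ).factorial : ℝ) := by exact_mod_cast h1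
  have hA : ((k - m).factorial : ℝ) / ((k - τ).factorial : ℝ) ≤ 1 / d ^ (m - τ) := by
    rw [div_le_div_iff₀ (by positivity) (by positivity)]
    nlinarith [hfact]
  calc ((k - m).factorial : ℝ) / ((k - τ).factorial : ℝ)
          * ((m.choose τ : ℝ) / (m : ℝ) ^ τ) * ((k : ℝ) - y) ^ (m - τ) * y ^ τ
      ≤ (1 / d ^ (m - τ)) * ((m.choose τ : ℝ) / (m : ℝ) ^ τ)
          * (k : ℝ) ^ (m - τ) * (m : ℝ) ^ τ := by
        gcongr
        · linarith
    _ = (m.choose τ : ℝ) * c ^ (m - τ) := by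
        rw [hc, div_pow]
        field_simp
end
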